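/- Let h₁, h₂, h₃ be independent exponential random variables with rate 1. Then P(h₁ < h₂/(1+h₃)) = ∫₀^∞ e^{-z}/(2+z) dz. -/

import Mathlib

open MeasureTheory ProbabilityTheory Real Set

noncomputable def pgvNu : Measure ℝ := ProbabilityTheory.expMeasure 1

instance : IsProbabilityMeasure pgvNu := isProbabilityMeasure_expMeasure one_pos

lemma pgvNu_apply {s : Set ℝ} (hs : MeasurableSet s) :
    pgvNu s = ∫⁻ x in s, exponentialPDF 1 x := by
  rw [pgvNu, expMeasure, gammaMeasure, withDensity_apply _ hs]
  rfl

lemma pgv_lintegral_nu {g : ℝ → ℝ} (hg : Measurable g) (hnn : ∀ x ∈ Ioi (0:ℝ), 0 ≤ g x)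
    (hint : IntegrableOn (fun x => exp (-x) * g x) (Ioi 0)) :
    ∫⁻ x, ENNReal.ofReal (g x) ∂pgvNu = ENNReal.ofReal (∫ x in Ioi 0, exp (-x) * g x) := by
  have hpdf : Measurable (gammaPDF 1 1) :=
    (measurable_exponentialPDFReal 1).ennreal_ofReal
  have h1 : ∫⁻ x, ENNReal.ofReal (g x) ∂pgvNu
      = ∫⁻ x, exponentialPDF 1 x * ENNReal.ofReal (g x) := by
    rw [pgvNu, expMeasure, gammaMeasure,
      lintegral_withDensity_eq_lintegral_mul _ hpdf hg.ennreal_ofReal]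
    rfl
  rw [h1, ← lintegral_add_compl (fun x => exponentialPDF 1 x * ENNReal.ofReal (g x))
    (measurableSet_Ioi (a := (0:ℝ)))]
  have h2 : ∫⁻ x in (Ioi (0:ℝ))ᶜ, exponentialPDF 1 x * ENNReal.ofReal (g x) = 0 := by
    rw [compl_Ioi, setLIntegral_congr (Iio_ae_eq_Iic (a := (0:ℝ))).symm]
    rw [setLIntegral_congr_fun measurableSet_Iio
      (fun x (hx : x < 0) => by rw [exponentialPDF_of_neg hx, zero_mul])]
    simp
  have h3 : ∫⁻ x in Ioi (0:ℝ), exponentialPDF 1 x * ENNReal.ofReal (g x)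
      = ∫⁻ x in Ioi (0:ℝ), ENNReal.ofReal (exp (-x) * g x) := by
    refine setLIntegral_congr_fun measurableSet_Ioi (fun x hx => ?_)
    rw [exponentialPDF_of_nonneg (le_of_lt hx), one_mul, one_mul,
      ← ENNReal.ofReal_mul (exp_pos _).le]
  rw [h2, add_zero, h3, ← ofReal_integral_eq_lintegral_ofReal hint]
  exact (ae_restrict_iff' measurableSet_Ioi).2
    (ae_of_all _ fun x hx => mul_nonneg (exp_pos _).le (hnn x hx))

lemma pgvNu_Iic (t : ℝ) :
    pgvNu (Iic t) = ENNReal.ofReal (if 0 ≤ t then 1 - exp (-t) else 0) := by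
  rw [pgvNu_apply measurableSet_Iic]
  simpa using lintegral_exponentialPDF_eq_antiDeriv one_pos t

lemma pgvNu_Iio (t : ℝ) : pgvNu (Iio t) = ENNReal.ofReal (1 - exp (-t)) := by
  have h1 : pgvNu (Iio t) = pgvNu (Iic t) := by
    rw [pgvNu_apply measurableSet_Iio, pgvNu_apply measurableSet_Iic,
      setLIntegral_congr (Iio_ae_eq_Iic (a := t))]
  rw [h1, pgvNu_Iic]
  split_ifs with ht
  · rfl
  · rw [ENNReal.ofReal_zero, Eq.comm, ENNReal.ofReal_eq_zero, sub_nonpos]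
    exact one_le_exp (by linarith)

lemma pgv_map_eq {Ω : Type*} [MeasurableSpace Ω] (μ : Measure Ω) [IsProbabilityMeasure μ]
    {f : Ω → ℝ} (hf : Measurable f) (hpos : ∀ ω, 0 ≤ f ω)
    (hexp : ∀ t : ℝ, 0 ≤ t → μ {ω | t < f ω} = ENNReal.ofReal (exp (-t))) :
    μ.map f = pgvNu := by
  haveI : IsProbabilityMeasure (μ.map f) := Measure.isProbabilityMeasure_map hf.aemeasurable
  refine MeasureTheory.Measure.ext_of_Iic _ _ (fun a => ?_)
  rw [Measure.map_apply hf measurableSet_Iic, pgvNu_Iic]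
  rcases le_or_gt 0 a with ha | ha
  · have hset : f ⁻¹' Iic a = {ω | a < f ω}ᶜ := by
      ext ω; simp [not_lt]
    have hm : MeasurableSet {ω | a < f ω} := hf measurableSet_Ioi
    rw [hset, measure_compl hm (measure_ne_top _ _), measure_univ, hexp a ha, if_pos ha,
      ENNReal.ofReal_sub _ (exp_pos _).le, ENNReal.ofReal_one]
  · have hset : f ⁻¹' Iic a = ∅ := by
      ext ω
      simp only [mem_preimage, mem_Iic, mem_empty_iff_false, iff_false, not_le]
      exact lt_of_lt_of_le ha (hpos ω)
    rw [hset, if_neg (not_le.2 ha)]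
    simp

lemma pgv_inner {z : ℝ} (hz : 0 < z) :
    ∫⁻ y, ENNReal.ofReal (1 - exp (-(y / (1 + z)))) ∂pgvNu
      = ENNReal.ofReal (1 / (2 + z)) := by
  have h1z : (0:ℝ) < 1 + z := by linarith
  have h2z : (0:ℝ) < 2 + z := by linarith
  set b : ℝ := 1 + 1 / (1 + z) with hb_def
  have hb : (0:ℝ) < b := by positivity
  have key : ∀ y : ℝ, exp (-y) * (1 - exp (-(y / (1 + z)))) = exp (-y) - exp (-b * y) := by
    intro y
    rw [mul_sub, mul_one, ← exp_add]
    congr 1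
    have hne : (1 + z) ≠ 0 := ne_of_gt h1z
    rw [hb_def]
    field_simp
    ring
  have hint1 : IntegrableOn (fun x : ℝ => exp (-x)) (Ioi 0) := by
    simpa using exp_neg_integrableOn_Ioi 0 one_pos
  have hint2 : IntegrableOn (fun x : ℝ => exp (-b * x)) (Ioi 0) :=
    exp_neg_integrableOn_Ioi 0 hb
  have hint : IntegrableOn (fun y : ℝ => exp (-y) * (1 - exp (-(y / (1 + z))))) (Ioi 0) :=
    (hint1.sub hint2).congr (ae_of_all _ fun y => by
      simp only [Pi.sub_apply]; exact (key y).symm)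
  have hgmeas : Measurable (fun y : ℝ => 1 - exp (-(y / (1 + z)))) :=
    measurable_const.sub ((measurable_id.div_const (1 + z)).neg.exp)
  rw [pgv_lintegral_nu hgmeas (fun y hy => by
    have hd : (0:ℝ) ≤ y / (1 + z) := div_nonneg (le_of_lt hy) h1z.le
    simp only [sub_nonneg]
    exact exp_le_one_iff.2 (by linarith)) hint]
  congr 1
  have heq : ∫ y in Ioi (0:ℝ), exp (-y) * (1 - exp (-(y / (1 + z))))
      = ∫ y in Ioi (0:ℝ), (exp (-y) - exp (-b * y)) :=
    setIntegral_congr_fun measurableSet_Ioi (fun y _ => key y)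
  rw [heq, integral_sub hint1 hint2, integral_exp_neg_Ioi_zero]
  have h2 : ∫ y in Ioi (0:ℝ), exp (-b * y) = b⁻¹ := by
    have hcomp := integral_comp_mul_left_Ioi (fun x : ℝ => exp (-x)) 0 hb
    simp only [mul_zero, smul_eq_mul] at hcomp
    rw [show (fun y : ℝ => exp (-b * y)) = (fun y : ℝ => exp (-(b * y))) from
      funext (fun y => by rw [neg_mul]), hcomp, integral_exp_neg_Ioi_zero, mul_one]
  rw [h2, hb_def]
  field_simp
  ring

lemma pgv_ioi_ae : ∀ᵐ z ∂pgvNu, z ∈ Ioi (0:ℝ) := by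
  rw [ae_iff]
  have : {z : ℝ | ¬ z ∈ Ioi (0:ℝ)} = Iic 0 := by
    ext z; simp [not_lt]
  rw [this]
  have := pgvNu_Iic 0
  simpa using this

theorem prob_good_vertex {Ω : Type*} [MeasurableSpace Ω] (μ : Measure Ω)
    [IsProbabilityMeasure μ] (h : Fin 3 → Ω → ℝ)
    (hmeas : ∀ i, Measurable (h i))
    (hindep : iIndepFun h μ)
    (hpos : ∀ i ω, 0 ≤ h i ω)
    (hexp : ∀ i, ∀ t : ℝ, 0 ≤ t → μ {ω | t < h i ω} = ENNReal.ofReal (Real.exp (-t))) :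
    μ {ω | h 0 ω < h 1 ω / (1 + h 2 ω)} =
      ENNReal.ofReal (∫ z in Set.Ioi (0:ℝ), Real.exp (-z) / (2 + z)) := by
  have law : ∀ i, μ.map (h i) = pgvNu := fun i =>
    pgv_map_eq μ (hmeas i) (hpos i) (hexp i)
  have i12 : IndepFun (h 1) (h 2) μ := hindep.indepFun (by decide)
  have m12 : μ.map (fun ω => (h 1 ω, h 2 ω)) = pgvNu.prod pgvNu := by
    rw [(indepFun_iff_map_prod_eq_prod_map_map (hmeas 1).aemeasurable
      (hmeas 2).aemeasurable).1 i12, law 1, law 2]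
  have i120 : IndepFun (fun ω => (h 1 ω, h 2 ω)) (h 0) μ :=
    hindep.indepFun_prodMk hmeas 1 2 0 (by decide) (by decide)
  set T : Ω → (ℝ × ℝ) × ℝ := fun ω => ((h 1 ω, h 2 ω), h 0 ω) with hT_def
  have hT : Measurable T := ((hmeas 1).prodMk (hmeas 2)).prodMk (hmeas 0)
  have mT : μ.map T = (pgvNu.prod pgvNu).prod pgvNu := by
    rw [hT_def, (indepFun_iff_map_prod_eq_prod_map_map
      ((hmeas 1).prodMk (hmeas 2)).aemeasurable (hmeas 0).aemeasurable).1 i120, m12, law 0]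
  set S : Set ((ℝ × ℝ) × ℝ) := {p | p.2 < p.1.1 / (1 + p.1.2)} with hS_def
  have hSmeas : MeasurableSet S :=
    measurableSet_lt measurable_snd ((measurable_fst.comp measurable_fst).div
      (measurable_const.add (measurable_snd.comp measurable_fst)))
  have hset : {ω | h 0 ω < h 1 ω / (1 + h 2 ω)} = T ⁻¹' S := rfl
  rw [hset, ← Measure.map_apply hT hSmeas, mT, Measure.prod_apply hSmeas]
  have hsec : ∀ p : ℝ × ℝ, Prod.mk p ⁻¹' S = Iio (p.1 / (1 + p.2)) := fun p => rfl
  have step1 : ∫⁻ p, pgvNu (Prod.mk p ⁻¹' S) ∂(pgvNu.prod pgvNu)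
      = ∫⁻ p : ℝ × ℝ, ENNReal.ofReal (1 - exp (-(p.1 / (1 + p.2)))) ∂(pgvNu.prod pgvNu) := by
    refine lintegral_congr (fun p => ?_)
    rw [hsec p, pgvNu_Iio]
  rw [step1]
  have hfmeas : Measurable (fun p : ℝ × ℝ => ENNReal.ofReal (1 - exp (-(p.1 / (1 + p.2))))) :=
    (measurable_const.sub ((measurable_fst.div
      (measurable_const.add measurable_snd)).neg.exp)).ennreal_ofReal
  rw [lintegral_prod_symm _ hfmeas.aemeasurable]
  have step2 : ∫⁻ z, (∫⁻ y, ENNReal.ofReal (1 - exp (-(y / (1 + z)))) ∂pgvNu) ∂pgvNu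
      = ∫⁻ z, ENNReal.ofReal (1 / (2 + z)) ∂pgvNu := by
    refine lintegral_congr_ae (pgv_ioi_ae.mono (fun z hz => ?_))
    exact pgv_inner hz
  rw [step2]
  have hgmeas : Measurable (fun z : ℝ => 1 / (2 + z)) :=
    measurable_const.div (measurable_const.add measurable_id)
  have hint : IntegrableOn (fun z : ℝ => exp (-z) * (1 / (2 + z))) (Ioi 0) := by
    have hint1 : IntegrableOn (fun x : ℝ => exp (-x)) (Ioi 0) := by
      simpa using exp_neg_integrableOn_Ioi 0 one_pos
    refine Integrable.mono hint1 ((measurable_exp.comp measurable_neg).mul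
      hgmeas).aestronglyMeasurable ?_
    refine (ae_restrict_iff' measurableSet_Ioi).2 (ae_of_all _ (fun z hz => ?_))
    have h2z : (1:ℝ) ≤ 2 + z := by simp only [mem_Ioi] at hz; linarith
    have hnn : (0:ℝ) ≤ exp (-z) * (1 / (2 + z)) :=
      mul_nonneg (exp_pos _).le (by positivity)
    rw [Real.norm_eq_abs, Real.norm_eq_abs, abs_of_nonneg hnn, abs_of_nonneg (exp_pos _).le]
    calc exp (-z) * (1 / (2 + z)) ≤ exp (-z) * 1 := by
          refine mul_le_mul_of_nonneg_left ?_ (exp_pos _).le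
          rw [div_le_one (by linarith)]; linarith
      _ = exp (-z) := mul_one _
  rw [pgv_lintegral_nu hgmeas (fun z hz => by
    have : (0:ℝ) < 2 + z := by simp only [mem_Ioi] at hz; linarith
    positivity) hint]
  congr 1
  refine setIntegral_congr_fun measurableSet_Ioi (fun z _ => ?_)
  rw [mul_one_div]
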